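/- Let E be the set of scaled extremals in a max cone K in ℝ≥0^n, and let S ⊆ K consist of scaled elements. Then the following are equivalent: (1) S is a minimal set of generators for K (S generates K and no proper subset of S generates K); (2) S = E and S generates K; (3) S is a basis for K. -/

import Mathlib

open scoped NNReal
set_option maxHeartbeats 1000000
set_option synthInstance.maxHeartbeats 400000

/-- The max-algebraic span of `S`: all vectors `⨆_{x ∈ S} λ_x • x` where only
finitely many coefficients `λ_x` are nonzero (`MaxSpan ∅ = {0}`). -/
def MaxSpan {n : ℕ} (S : Set (Fin n → ℝ≥0)) : Set (Fin n → ℝ≥0) :=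
  {u | ∃ (F : Finset (Fin n → ℝ≥0)) (lam : (Fin n → ℝ≥0) → ℝ≥0),
    ↑F ⊆ S ∧ u = F.sup (fun x => lam x • x)}

/-- A max cone: a subset of `ℝ≥0ⁿ` closed under pointwise max `⊔` and under
multiplication by nonnegative scalars. -/
def MaxCone {n : ℕ} (K : Set (Fin n → ℝ≥0)) : Prop :=
  0 ∈ K ∧ (∀ x ∈ K, ∀ y ∈ K, x ⊔ y ∈ K) ∧ (∀ (c : ℝ≥0), ∀ x ∈ K, c • x ∈ K)

/-- `u` is an extremal in `K` if `u = v ⊔ w` with `v, w ∈ K` implies `u = v` or `u = w`. -/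
def IsExtremal {n : ℕ} (K : Set (Fin n → ℝ≥0)) (u : Fin n → ℝ≥0) : Prop :=
  u ∈ K ∧ ∀ v ∈ K, ∀ w ∈ K, u = v ⊔ w → u = v ∨ u = w

/-- A vector is scaled if its max norm `⨆ i, x i` equals `1`. -/
def Scaled {n : ℕ} (x : Fin n → ℝ≥0) : Prop := (⨆ i, x i) = 1

/-- The support of a vector. -/
def supp {n : ℕ} (v : Fin n → ℝ≥0) : Set (Fin n) := {j | 0 < v j}

/-- For `j ∈ supp u`, `rescale u j = (1 / u j) • u`, the `j`-scaling `u(j)`. -/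
noncomputable def rescale {n : ℕ} (u : Fin n → ℝ≥0) (j : Fin n) : Fin n → ℝ≥0 :=
  (u j)⁻¹ • u

/-- `T(j) = {u(j) : u ∈ T, j ∈ supp u}`. -/
noncomputable def setScale {n : ℕ} (T : Set (Fin n → ℝ≥0)) (j : Fin n) :
    Set (Fin n → ℝ≥0) :=
  {y | ∃ u ∈ T, j ∈ supp u ∧ y = rescale u j}

/-- `u` is minimal in `T` if `v ∈ T` and `v ≤ u` imply `v = u`. -/
def MinimalIn {n : ℕ} (T : Set (Fin n → ℝ≥0)) (u : Fin n → ℝ≥0) : Prop :=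
  u ∈ T ∧ ∀ v ∈ T, v ≤ u → v = u

/-- A set is totally dependent if each of its elements is a max combination of
the remaining ones. -/
def TotallyDependent {n : ℕ} (S : Set (Fin n → ℝ≥0)) : Prop :=
  ∀ x ∈ S, x ∈ MaxSpan (S \ {x})

/-- A set is independent if none of its elements is a max combination of
the remaining ones. -/
def IndependentSet {n : ℕ} (S : Set (Fin n → ℝ≥0)) : Prop :=
  ∀ x ∈ S, x ∉ MaxSpan (S \ {x})

/-- A basis for `K` is an independent set of generators for `K`. -/
def IsBasis {n : ℕ} (S K : Set (Fin n → ℝ≥0)) : Prop :=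
  IndependentSet S ∧ MaxSpan S = K

namespace Stmt8Aux

variable {n : ℕ}

lemma bot_eq_zero' : (⊥ : Fin n → ℝ≥0) = 0 := by
  ext j; rfl

lemma subset_maxSpan {S : Set (Fin n → ℝ≥0)} : S ⊆ MaxSpan S := by
  intro x hx
  refine ⟨{x}, fun _ => 1, by simpa, by simp⟩

lemma sup_smul (a b : ℝ≥0) (x : Fin n → ℝ≥0) : (a ⊔ b) • x = a • x ⊔ b • x := by
  ext j
  simp only [Pi.sup_apply, Pi.smul_apply, smul_eq_mul]
  rcases le_total a b with h | h
  · rw [sup_eq_right.2 h, sup_eq_right.2 (mul_le_mul_left h _)]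
  · rw [sup_eq_left.2 h, sup_eq_left.2 (mul_le_mul_left h _)]

lemma smul_sup' (c : ℝ≥0) (x y : Fin n → ℝ≥0) : c • (x ⊔ y) = c • x ⊔ c • y := by
  ext j
  simp only [Pi.sup_apply, Pi.smul_apply, smul_eq_mul]
  exact mul_max_of_nonneg _ _ (zero_le (a := c))

/-- Any max cone containing the coefficients' vectors contains a max combination. -/
lemma sup_mem_cone {K : Set (Fin n → ℝ≥0)} (hK : MaxCone K)
    {F : Finset (Fin n → ℝ≥0)} (lam : (Fin n → ℝ≥0) → ℝ≥0) (hF : ↑F ⊆ K) :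
    F.sup (fun x => lam x • x) ∈ K := by
  classical
  induction F using Finset.induction with
  | empty => rw [Finset.sup_empty, bot_eq_zero']; exact hK.1
  | @insert a F ha ih =>
    rw [Finset.sup_insert]
    exact hK.2.1 _ (hK.2.2 _ _ (hF (Finset.mem_insert_self _ _))) _
      (ih (fun y hy => hF (Finset.mem_insert_of_mem hy)))

lemma maxSpan_subset {K S : Set (Fin n → ℝ≥0)} (hK : MaxCone K) (hSK : S ⊆ K) :
    MaxSpan S ⊆ K := by
  rintro u ⟨F, lam, hF, rfl⟩
  exact sup_mem_cone hK lam (hF.trans hSK)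

lemma maxCone_maxSpan (S : Set (Fin n → ℝ≥0)) : MaxCone (MaxSpan S) := by
  classical
  refine ⟨⟨∅, fun _ => 0, by simp, by rw [Finset.sup_empty, bot_eq_zero']⟩, ?_, ?_⟩
  · rintro v ⟨F, lam, hF, rfl⟩ w ⟨G, mu, hG, rfl⟩
    refine ⟨F ∪ G,
      fun y => (if y ∈ F then lam y else 0) ⊔ (if y ∈ G then mu y else 0), ?_, ?_⟩
    · intro y hy
      rcases Finset.mem_union.1 hy with h | h
      · exact hF h
      · exact hG h
    · have key : ∀ y : Fin n → ℝ≥0,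
          ((if y ∈ F then lam y else 0) ⊔ (if y ∈ G then mu y else 0)) • y =
          (if y ∈ F then lam y else 0) • y ⊔ (if y ∈ G then mu y else 0) • y :=
        fun y => sup_smul _ _ _
      have e1 : (F ∪ G).sup (fun y => (if y ∈ F then lam y else 0) • y) =
          F.sup (fun y => lam y • y) := by
        rw [Finset.sup_union]
        have h1 : F.sup (fun y => (if y ∈ F then lam y else 0) • y) =
            F.sup (fun y => lam y • y) :=
          Finset.sup_congr rfl (fun y hy => by simp [hy])
        have h2 : G.sup (fun y => (if y ∈ F then lam y else 0) • y) ≤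
            F.sup (fun y => lam y • y) := by
          refine Finset.sup_le fun y hy => ?_
          by_cases h : y ∈ F
          · simp only [h, if_pos]
            exact Finset.le_sup (f := fun y => lam y • y) h
          · simp only [h, if_neg, not_false_iff, zero_smul]
            exact fun j => zero_le
        rw [h1]
        exact sup_eq_left.2 (h1 ▸ h2)
      have e2 : (F ∪ G).sup (fun y => (if y ∈ G then mu y else 0) • y) =
          G.sup (fun y => mu y • y) := by
        rw [Finset.sup_union]
        have h1 : G.sup (fun y => (if y ∈ G then mu y else 0) • y) =
            G.sup (fun y => mu y • y) :=
          Finset.sup_congr rfl (fun y hy => by simp [hy])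
        have h2 : F.sup (fun y => (if y ∈ G then mu y else 0) • y) ≤
            G.sup (fun y => mu y • y) := by
          refine Finset.sup_le fun y hy => ?_
          by_cases h : y ∈ G
          · simp only [h, if_pos]
            exact Finset.le_sup (f := fun y => mu y • y) h
          · simp only [h, if_neg, not_false_iff, zero_smul]
            exact fun j => zero_le
        rw [h1]
        exact sup_eq_right.2 (h1 ▸ h2)
      calc F.sup (fun y => lam y • y) ⊔ G.sup (fun y => mu y • y)
          = (F ∪ G).sup (fun y => (if y ∈ F then lam y else 0) • y) ⊔
            (F ∪ G).sup (fun y => (if y ∈ G then mu y else 0) • y) := by rw [e1, e2]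
        _ = (F ∪ G).sup (fun y =>
              ((if y ∈ F then lam y else 0) ⊔ (if y ∈ G then mu y else 0)) • y) := by
            rw [← Finset.sup_sup]
            exact Finset.sup_congr rfl (fun y _ => (key y).symm)
  · rintro c v ⟨F, lam, hF, rfl⟩
    refine ⟨F, fun y => c * lam y, hF, ?_⟩
    clear hF
    induction F using Finset.induction with
    | empty => simp [bot_eq_zero']
    | @insert a F ha ih =>
      rw [Finset.sup_insert, Finset.sup_insert, smul_sup', ih, mul_smul]

lemma maxSpan_mono {S T : Set (Fin n → ℝ≥0)} (h : S ⊆ T) : MaxSpan S ⊆ MaxSpan T := by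
  rintro u ⟨F, lam, hF, rfl⟩
  exact ⟨F, lam, hF.trans h, rfl⟩

lemma scaled_ne_zero {u : Fin n → ℝ≥0} (hu : Scaled u) : u ≠ 0 := by
  intro h
  subst h
  have : (⨆ i, (0 : Fin n → ℝ≥0) i) ≤ 0 := ciSup_le' fun i => le_refl _
  rw [hu] at this
  exact absurd this (by norm_num)

lemma scaled_eq {u x : Fin n → ℝ≥0} (hu : Scaled u) (hx : Scaled x) {c : ℝ≥0}
    (h : u = c • x) : u = x := by
  have h1 : (⨆ i, u i) = c * ⨆ i, x i := by
    rw [h, NNReal.mul_iSup]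
    exact iSup_congr fun i => rfl
  rw [hu, hx, mul_one] at h1
  rw [h, ← h1, one_smul]

lemma extremal_eq_term {K : Set (Fin n → ℝ≥0)} (hK : MaxCone K) {u : Fin n → ℝ≥0}
    (hu : IsExtremal K u) (hu0 : u ≠ 0) {F : Finset (Fin n → ℝ≥0)}
    {lam : (Fin n → ℝ≥0) → ℝ≥0} (hF : ↑F ⊆ K)
    (heq : u = F.sup (fun x => lam x • x)) : ∃ x ∈ F, u = lam x • x := by
  classical
  induction F using Finset.induction with
  | empty =>
    rw [Finset.sup_empty, bot_eq_zero'] at heq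
    exact absurd heq hu0
  | @insert a F ha ih =>
    rw [Finset.sup_insert] at heq
    have hFK : ↑F ⊆ K := fun y hy => hF (Finset.mem_insert_of_mem hy)
    have h1 : lam a • a ∈ K := hK.2.2 _ _ (hF (Finset.mem_insert_self _ _))
    have h2 : F.sup (fun x => lam x • x) ∈ K := sup_mem_cone hK lam hFK
    rcases hu.2 _ h1 _ h2 heq with h | h
    · exact ⟨a, Finset.mem_insert_self _ _, h⟩
    · obtain ⟨x, hx, hx2⟩ := ih hFK h
      exact ⟨x, Finset.mem_insert_of_mem hx, hx2⟩

/-- If `u` is a scaled extremal of the cone and `S` generates it (with all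
elements of `S` scaled), then `u ∈ S`. -/
lemma extremal_mem {K S : Set (Fin n → ℝ≥0)} (hK : MaxCone K) (hSK : S ⊆ K)
    (hSsc : ∀ x ∈ S, Scaled x) (hspan : MaxSpan S = K) {u : Fin n → ℝ≥0}
    (huE : IsExtremal K u) (husc : Scaled u) : u ∈ S := by
  have hu : u ∈ MaxSpan S := hspan ▸ huE.1
  obtain ⟨F, lam, hF, heq⟩ := hu
  obtain ⟨x, hxF, hx⟩ := extremal_eq_term hK huE (scaled_ne_zero husc)
    (hF.trans hSK) heq
  have hxS : x ∈ S := hF hxF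
  have := scaled_eq husc (hSsc x hxS) hx
  exact this ▸ hxS

lemma span_decomp {S : Set (Fin n → ℝ≥0)} (x : Fin n → ℝ≥0) {v : Fin n → ℝ≥0}
    (hv : v ∈ MaxSpan S) :
    ∃ (c : ℝ≥0) (r : Fin n → ℝ≥0), r ∈ MaxSpan (S \ {x}) ∧ v = c • x ⊔ r := by
  classical
  obtain ⟨F, lam, hF, rfl⟩ := hv
  by_cases hx : x ∈ F
  · refine ⟨lam x, (F.erase x).sup (fun y => lam y • y), ⟨F.erase x, lam, ?_, rfl⟩, ?_⟩
    · intro y hy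
      have hy' := Finset.mem_coe.1 hy
      exact ⟨hF (Finset.mem_coe.2 (Finset.mem_of_mem_erase hy')),
        Finset.ne_of_mem_erase hy'⟩
    · conv_lhs => rw [← Finset.insert_erase hx]
      rw [Finset.sup_insert]
  · refine ⟨0, F.sup (fun y => lam y • y),
      ⟨F, lam, fun y hy => ⟨hF hy, fun h => hx (h ▸ Finset.mem_coe.1 hy)⟩, rfl⟩, ?_⟩
    ext j
    simp

lemma extremal_of_indep {K S : Set (Fin n → ℝ≥0)}
    (hspan : MaxSpan S = K) (hind : IndependentSet S) {x : Fin n → ℝ≥0}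
    (hx : x ∈ S) : IsExtremal K x := by
  refine ⟨hspan ▸ subset_maxSpan hx, ?_⟩
  intro v hv w hw heq
  by_contra hcon
  push_neg at hcon
  obtain ⟨hxv, hxw⟩ := hcon
  obtain ⟨c, r, hr, hvr⟩ := span_decomp x (show v ∈ MaxSpan S from hspan ▸ hv)
  obtain ⟨d, s, hs, hws⟩ := span_decomp x (show w ∈ MaxSpan S from hspan ▸ hw)
  have hvx : v ≤ x := heq ▸ le_sup_left
  have hwx : w ≤ x := heq ▸ le_sup_right
  have hc : c < 1 := by
    by_contra h
    push_neg at h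
    have hxle : x ≤ v := by
      intro j
      calc x j = 1 * x j := (one_mul _).symm
        _ ≤ c * x j := mul_le_mul_left h _
        _ ≤ (c • x ⊔ r) j := le_sup_left
        _ = v j := by rw [← hvr]
    exact hxv (le_antisymm hvx hxle).symm
  have hd : d < 1 := by
    by_contra h
    push_neg at h
    have hxle : x ≤ w := by
      intro j
      calc x j = 1 * x j := (one_mul _).symm
        _ ≤ d * x j := mul_le_mul_left h _
        _ ≤ (d • x ⊔ s) j := le_sup_left
        _ = w j := by rw [← hws]
    exact hxw (le_antisymm hwx hxle).symm
  have hrx : r ≤ x := le_trans (hvr ▸ le_sup_right) hvx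
  have hsx : s ≤ x := le_trans (hws ▸ le_sup_right) hwx
  have hxt : x = r ⊔ s := by
    ext j
    have hj : x j = (c * x j ⊔ r j) ⊔ (d * x j ⊔ s j) := by
      have := congrFun heq j
      rw [hvr, hws] at this
      simpa using this
    rcases eq_or_lt_of_le (zero_le (a := x j)) with h0 | h0
    · have h1 : r j = 0 := le_antisymm (h0 ▸ hrx j) zero_le
      have h2 : s j = 0 := le_antisymm (h0 ▸ hsx j) zero_le
      simp [Pi.sup_apply, h1, h2, ← h0]
    · have hc' : c * x j < x j := by
        calc c * x j < 1 * x j := mul_lt_mul_of_pos_right hc h0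
          _ = x j := one_mul _
      have hd' : d * x j < x j := by
        calc d * x j < 1 * x j := mul_lt_mul_of_pos_right hd h0
          _ = x j := one_mul _
      rw [Pi.sup_apply]
      refine le_antisymm ?_ (sup_le (hrx j) (hsx j))
      by_contra hgt
      push_neg at hgt
      have hlt : (c * x j ⊔ r j) ⊔ (d * x j ⊔ s j) < x j :=
        max_lt (max_lt hc' (lt_of_le_of_lt le_sup_left hgt))
          (max_lt hd' (lt_of_le_of_lt le_sup_right hgt))
      exact absurd hj (ne_of_gt hlt)
  have hmem2 : r ⊔ s ∈ MaxSpan (S \ {x}) := (maxCone_maxSpan _).2.1 _ hr _ hs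
  exact hind x hx (hxt.symm ▸ hmem2)

end Stmt8Aux

/-- for a set `S` of scaled elements of a max cone `K`, with `E`
the set of scaled extremals of `K`, the following are equivalent:
(1) `S` is a minimal generating set for `K`; (2) `S = E` and `S` generates `K`;
(3) `S` is a basis for `K`. -/
theorem stmt8 {n : ℕ} (K S : Set (Fin n → ℝ≥0)) (hK : MaxCone K)
    (hSK : S ⊆ K) (hSsc : ∀ x ∈ S, Scaled x) :
    ((MaxSpan S = K ∧ ∀ T ⊂ S, MaxSpan T ≠ K) ↔
      (S = {x | IsExtremal K x ∧ Scaled x} ∧ MaxSpan S = K)) ∧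
    ((S = {x | IsExtremal K x ∧ Scaled x} ∧ MaxSpan S = K) ↔ IsBasis S K) := by
  open Stmt8Aux in
  -- (3) → (2)
  have h32 : IsBasis S K → (S = {x | IsExtremal K x ∧ Scaled x} ∧ MaxSpan S = K) := by
    rintro ⟨hind, hspan⟩
    refine ⟨Set.Subset.antisymm ?_ ?_, hspan⟩
    · intro x hx
      exact ⟨extremal_of_indep hspan hind hx, hSsc x hx⟩
    · rintro u ⟨huE, husc⟩
      exact extremal_mem hK hSK hSsc hspan huE husc
  -- (2) → (3)
  have h23 : (S = {x | IsExtremal K x ∧ Scaled x} ∧ MaxSpan S = K) → IsBasis S K := by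
    rintro ⟨hSE, hspan⟩
    refine ⟨?_, hspan⟩
    intro x hx hmem
    obtain ⟨F, lam, hF, heq⟩ := hmem
    have hxE : IsExtremal K x ∧ Scaled x := by
      have h' := hx; rw [hSE] at h'; exact h'
    have hFK : ↑F ⊆ K := fun y hy => hSK ((hF hy).1)
    obtain ⟨y, hyF, hy⟩ := extremal_eq_term hK hxE.1 (scaled_ne_zero hxE.2) hFK heq
    have hyS : y ∈ S \ {x} := hF hyF
    have hxy : x = y := scaled_eq hxE.2 (hSsc y hyS.1) hy
    exact hyS.2 hxy.symm
  -- (2) → (1)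
  have h21 : (S = {x | IsExtremal K x ∧ Scaled x} ∧ MaxSpan S = K) →
      (MaxSpan S = K ∧ ∀ T ⊂ S, MaxSpan T ≠ K) := by
    rintro ⟨hSE, hspan⟩
    refine ⟨hspan, ?_⟩
    rintro T hT hTspan
    obtain ⟨x, hxS, hxT⟩ := Set.exists_of_ssubset hT
    have hxE : IsExtremal K x ∧ Scaled x := by
      have h' := hxS; rw [hSE] at h'; exact h'
    have hTS : T ⊆ S := hT.1
    have : x ∈ T := extremal_mem hK (hTS.trans hSK)
      (fun y hy => hSsc y (hTS hy)) hTspan hxE.1 hxE.2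
    exact hxT this
  -- (1) → (3)
  have h13 : (MaxSpan S = K ∧ ∀ T ⊂ S, MaxSpan T ≠ K) → IsBasis S K := by
    rintro ⟨hspan, hmin⟩
    refine ⟨?_, hspan⟩
    intro x hx hmem
    have hsub : S ⊆ MaxSpan (S \ {x}) := by
      intro y hy
      by_cases h : y = x
      · exact h ▸ hmem
      · exact subset_maxSpan ⟨hy, h⟩
    have hspan' : MaxSpan (S \ {x}) = K := by
      apply Set.Subset.antisymm
      · rw [← hspan]
        exact maxSpan_mono Set.diff_subset
      · rw [← hspan]
        exact maxSpan_subset (maxCone_maxSpan _) hsub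
    exact hmin (S \ {x}) (Set.sdiff_singleton_ssubset.2 hx) hspan'
  exact ⟨⟨fun h1 => h32 (h13 h1), fun h2 => h21 h2⟩, ⟨h23, h32⟩⟩
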